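/- arXiv:2406.06522 — 2 statements merged into one kernel-verified Lean document; each statement's English description precedes it below -/
import Mathlib

section
/- For every κ ∈ (0,8) with cos(4π/κ) < 0 (equivalently ν(κ) > 0) and every x₁ < x₂ < x₃ < x₄: ν(κ)² Z_a^(κ)(x) + ν(κ) Z_b^(κ)(x) > 0 and ν(κ) Z_a^(κ)(x) + ν(κ)² Z_b^(κ)(x) > 0. -/
/-- Rising factorial (Pochhammer symbol) `(q)ₙ = q(q+1)⋯(q+n−1)`. -/
noncomputable def risingFac (q : ℝ) (n : ℕ) : ℝ := ∏ i ∈ Finset.range n, (q + (i : ℝ))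

/-- Gauss hypergeometric function `₂F₁(a,b,c;z)`, defined as the sum of its power series. -/
noncomputable def hyp2F1 (a b c z : ℝ) : ℝ :=
  ∑' n : ℕ, risingFac a n * risingFac b n / (risingFac c n * (Nat.factorial n : ℝ)) * z ^ n

/-- Conformal weight `h(κ) = (6−κ)/(2κ)`. -/
noncomputable def hParam (κ : ℝ) : ℝ := (6 - κ) / (2 * κ)

/-- Loop fugacity `ν(κ) = −2cos(4π/κ)`. -/
noncomputable def nuParam (κ : ℝ) : ℝ := -2 * Real.cos (4 * Real.pi / κ)

/-- Cross-ratio `χ = ((x₂−x₁)(x₄−x₃))/((x₃−x₁)(x₄−x₂))`. -/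
noncomputable def crossRatio (x₁ x₂ x₃ x₄ : ℝ) : ℝ :=
  ((x₂ - x₁) * (x₄ - x₃)) / ((x₃ - x₁) * (x₄ - x₂))

/-- Pure partition function `Z_a^(κ)` of multiple SLE_κ (N = 2). -/
noncomputable def Za (κ x₁ x₂ x₃ x₄ : ℝ) : ℝ :=
  (x₂ - x₁) ^ (-(2 * hParam κ)) * (x₄ - x₃) ^ (-(2 * hParam κ)) *
    (1 - crossRatio x₁ x₂ x₃ x₄) ^ (2 / κ) *
    (hyp2F1 (4/κ) (1 - 4/κ) (8/κ) (1 - crossRatio x₁ x₂ x₃ x₄) /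
      hyp2F1 (4/κ) (1 - 4/κ) (8/κ) 1)

/-- Pure partition function `Z_b^(κ)` of multiple SLE_κ (N = 2). -/
noncomputable def Zb (κ x₁ x₂ x₃ x₄ : ℝ) : ℝ :=
  (x₄ - x₁) ^ (-(2 * hParam κ)) * (x₃ - x₂) ^ (-(2 * hParam κ)) *
    (crossRatio x₁ x₂ x₃ x₄) ^ (2 / κ) *
    (hyp2F1 (4/κ) (1 - 4/κ) (8/κ) (crossRatio x₁ x₂ x₃ x₄) /
      hyp2F1 (4/κ) (1 - 4/κ) (8/κ) 1)

/-- The fused three-point function `Z₃^(κ)(ξ,x₃,x₄)`. -/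
noncomputable def Z3 (κ ξ x₃ x₄ : ℝ) : ℝ :=
  (x₄ - x₃) ^ (2/κ) * (x₃ - ξ) ^ (1 - 8/κ) * (x₄ - ξ) ^ (1 - 8/κ) /
    hyp2F1 (4/κ) (1 - 4/κ) (8/κ) 1


open Finset

lemma risingFac_zero (q : ℝ) : risingFac q 0 = 1 := by simp [risingFac]

lemma risingFac_succ (q : ℝ) (n : ℕ) : risingFac q (n+1) = risingFac q n * (q + n) :=
  Finset.prod_range_succ _ n

lemma risingFac_succ' (q : ℝ) (n : ℕ) : risingFac q (n+1) = q * risingFac (q+1) n := by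
  rw [risingFac, Finset.prod_range_succ', risingFac, Nat.cast_zero, add_zero, mul_comm]
  congr 1
  refine Finset.prod_congr rfl fun i _ => ?_
  push_cast; ring

lemma risingFac_pos {q : ℝ} (hq : 0 < q) (n : ℕ) : 0 < risingFac q n :=
  Finset.prod_pos fun i _ => by positivity

lemma risingFac_add (q : ℝ) (m l : ℕ) :
    risingFac q (m + l) = risingFac q m * risingFac (q + m) l := by
  rw [risingFac, Finset.prod_range_add, risingFac, risingFac]
  congr 1
  refine Finset.prod_congr rfl fun i _ => ?_
  push_cast; ring

noncomputable def sT (a b c : ℝ) (n k : ℕ) : ℝ :=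
  (n.choose k : ℝ) * risingFac a k * risingFac b k *
    risingFac (c-a-b) (n-k) * risingFac (c + k) (n-k)

noncomputable def sG (a b c : ℝ) (n k : ℕ) : ℝ :=
  (k : ℝ) * ((n+1).choose k : ℝ) * risingFac a k * risingFac b k *
    risingFac (c-a-b) (n+1-k) * risingFac (c + k - 1) (n+1-k)

lemma sLocal (a b c : ℝ) (n k : ℕ) (hk : k ≤ n + 1) :
    ((n:ℝ)+1) * (sT a b c (n+1) k - (c-a+n)*(c-b+n) * sT a b c n k)
      = sG a b c n k - sG a b c n (k+1) := by
  rcases Nat.lt_or_ge k (n+1) with hlt | hge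
  · -- k ≤ n
    obtain ⟨j, rfl⟩ : ∃ j, n = k + j := ⟨n - k, by omega⟩
    have i1 : k + j + 1 - k = j + 1 := by omega
    have i2 : k + j - k = j := by omega
    have i3 : k + j + 1 - (k + 1) = j := by omega
    have h1 : (((k+j+1).choose k : ℝ)) * (j+1) = ((k+j).choose k : ℝ) * (k+j+1) := by
      have := Nat.choose_mul_succ_eq (k+j) k
      have h' : (k+j).choose k * (k+j+1) = (k+j+1).choose k * (j+1) := by
        simpa [i1] using this
      exact_mod_cast (congrArg (Nat.cast (R := ℝ)) h').symm
    have h2 : (((k+j+1).choose (k+1) : ℝ)) * (k+1) = ((k+j).choose k : ℝ) * (k+j+1) := by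
      have h := Nat.add_one_mul_choose_eq (k+j) k
      have h' : ((k+j+1) * (k+j).choose k : ℝ) = ((k+j+1).choose (k+1) : ℝ) * (k+1) := by
        exact_mod_cast congrArg (Nat.cast (R := ℝ)) h
      push_cast at h' ⊢
      linarith
    simp only [sT, sG, i1, i2, i3]
    have e1 : risingFac (c-a-b) (j+1) = risingFac (c-a-b) j * (c-a-b+j) := risingFac_succ _ _
    have e2 : risingFac (c + (k:ℝ)) (j+1) = risingFac (c + k) j * (c+k+j) := risingFac_succ _ _
    have e3 : risingFac a (k+1) = risingFac a k * (a+k) := risingFac_succ _ _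
    have e4 : risingFac b (k+1) = risingFac b k * (b+k) := risingFac_succ _ _
    have e5 : risingFac (c + (k:ℝ) - 1) (j+1) = (c+k-1) * risingFac (c + k) j := by
      have := risingFac_succ' (c + (k:ℝ) - 1) j
      simpa using this
    have e6 : (c : ℝ) + ((k:ℝ)+1) - 1 = c + k := by ring
    push_cast
    rw [e1, e2, e3, e4]
    rw [show (c : ℝ) + ((k:ℝ)+1) - 1 = c + (k:ℝ) by ring]
    rw [e5]
    -- now linear in the two unknown chooses
    have hj : ((j:ℝ)+1) ≠ 0 := by positivity
    have hk1 : ((k:ℝ)+1) ≠ 0 := by positivity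
    have hc1 : (((k+j+1).choose k : ℝ)) = ((k+j).choose k : ℝ) * (k+j+1) / (j+1) := by
      field_simp at h1 ⊢; push_cast at h1 ⊢; linarith [h1]
    have hc2 : (((k+j+1).choose (k+1) : ℝ)) = ((k+j).choose k : ℝ) * (k+j+1) / (k+1) := by
      field_simp at h2 ⊢; push_cast at h2 ⊢; linarith [h2]
    push_cast at hc1 hc2
    rw [hc1, hc2]
    field_simp
    ring
  · -- k = n+1
    have hk2 : k = n + 1 := by omega
    subst hk2
    have z1 : sT a b c n (n+1) = 0 := by
      simp [sT, Nat.choose_eq_zero_of_lt (Nat.lt_succ_self n)]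
    have z2 : sG a b c n (n+1+1) = 0 := by
      simp [sG, Nat.choose_eq_zero_of_lt (by omega : n+1 < n+1+1)]
    simp only [z1, z2, sT, sG]
    simp [Nat.choose_self, Nat.sub_self, risingFac_zero]
    push_cast
    ring

lemma saal_key (a b c : ℝ) (n : ℕ) :
    ∑ k ∈ range (n+1), sT a b c n k = risingFac (c-a) n * risingFac (c-b) n := by
  induction n with
  | zero => simp [sT, risingFac_zero]
  | succ n ih =>
    have htel : ∑ k ∈ range (n+2), (sG a b c n k - sG a b c n (k+1))
        = sG a b c n 0 - sG a b c n (n+2) := Finset.sum_range_sub' (sG a b c n) (n+2)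
    have hG0 : sG a b c n 0 = 0 := by simp [sG]
    have hGend : sG a b c n (n+2) = 0 := by
      simp [sG, Nat.choose_eq_zero_of_lt (by omega : n+1 < n+2)]
    have hTend : sT a b c n (n+1) = 0 := by
      simp [sT, Nat.choose_eq_zero_of_lt (Nat.lt_succ_self n)]
    have hstep : ∀ k ∈ range (n+2), ((n:ℝ)+1) * sT a b c (n+1) k
        = ((n:ℝ)+1) * ((c-a+n)*(c-b+n) * sT a b c n k)
          + (sG a b c n k - sG a b c n (k+1)) := by
      intro k hk
      have h := sLocal a b c n k (by simpa using Nat.lt_succ_iff.mp (mem_range.mp hk))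
      linear_combination h
    have hmain : ((n:ℝ)+1) * ∑ k ∈ range (n+2), sT a b c (n+1) k
        = ((n:ℝ)+1) * ((c-a+n)*(c-b+n) * ∑ k ∈ range (n+2), sT a b c n k) := by
      calc ((n:ℝ)+1) * ∑ k ∈ range (n+2), sT a b c (n+1) k
          = ∑ k ∈ range (n+2), ((n:ℝ)+1) * sT a b c (n+1) k := Finset.mul_sum _ _ _
        _ = ∑ k ∈ range (n+2), (((n:ℝ)+1) * ((c-a+n)*(c-b+n) * sT a b c n k)
              + (sG a b c n k - sG a b c n (k+1))) := Finset.sum_congr rfl hstep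
        _ = ∑ k ∈ range (n+2), ((n:ℝ)+1) * ((c-a+n)*(c-b+n) * sT a b c n k)
              + ∑ k ∈ range (n+2), (sG a b c n k - sG a b c n (k+1)) :=
            Finset.sum_add_distrib
        _ = ((n:ℝ)+1) * ((c-a+n)*(c-b+n) * ∑ k ∈ range (n+2), sT a b c n k) := by
            rw [htel, hG0, hGend, sub_zero, add_zero]
            simp only [← Finset.mul_sum]
    have hne : ((n:ℝ)+1) ≠ 0 := by positivity
    have hmain' := mul_left_cancel₀ hne hmain
    have hsplit : ∑ k ∈ range (n+2), sT a b c n k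
        = ∑ k ∈ range (n+1), sT a b c n k + sT a b c n (n+1) :=
      Finset.sum_range_succ (sT a b c n) (n+1)
    rw [hsplit, hTend, add_zero, ih] at hmain'
    show ∑ k ∈ range (n+2), sT a b c (n+1) k = _
    rw [hmain', risingFac_succ, risingFac_succ]
    ring

noncomputable def hcoef (a b c : ℝ) (n : ℕ) : ℝ :=
  risingFac a n * risingFac b n / (risingFac c n * (n.factorial : ℝ))

lemma saal_div (a b c : ℝ) (hc : 0 < c) (n : ℕ) :
    ∑ p ∈ Finset.HasAntidiagonal.antidiagonal n,
        hcoef a b c p.1 * (risingFac (c-a-b) p.2 / (p.2.factorial : ℝ))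
      = hcoef (c-a) (c-b) c n := by
  rw [Finset.Nat.sum_antidiagonal_eq_sum_range_succ_mk]
  have hterm : ∀ k ∈ range (n+1),
      hcoef a b c k * (risingFac (c-a-b) (n-k) / ((n-k).factorial : ℝ))
        = sT a b c n k / ((n.factorial : ℝ) * risingFac c n) := by
    intro k hk
    have hkn : k ≤ n := Nat.lt_succ_iff.mp (mem_range.mp hk)
    have hsplit : risingFac c n = risingFac c k * risingFac (c + k) (n - k) := by
      conv_lhs => rw [show n = k + (n-k) by omega]
      exact risingFac_add c k (n-k)
    have hchoose : ((n.choose k : ℝ)) = (n.factorial : ℝ) / ((k.factorial : ℝ) * ((n-k).factorial : ℝ)) :=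
      Nat.cast_choose ℝ hkn
    have h1 : risingFac c k ≠ 0 := ne_of_gt (risingFac_pos hc k)
    have h2 : risingFac (c + k) (n-k) ≠ 0 := ne_of_gt (risingFac_pos (by positivity) (n-k))
    have h3 : (k.factorial : ℝ) ≠ 0 := by exact_mod_cast k.factorial_ne_zero
    have h4 : ((n-k).factorial : ℝ) ≠ 0 := by exact_mod_cast (n-k).factorial_ne_zero
    have h5 : (n.factorial : ℝ) ≠ 0 := by exact_mod_cast n.factorial_ne_zero
    rw [hcoef, sT, hsplit, hchoose]
    field_simp
  rw [Finset.sum_congr rfl hterm, ← Finset.sum_div, saal_key, hcoef]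
  have h1 : risingFac c n ≠ 0 := ne_of_gt (risingFac_pos hc n)
  have h5 : (n.factorial : ℝ) ≠ 0 := by exact_mod_cast n.factorial_ne_zero
  rw [div_eq_div_iff (by positivity) (by positivity)]
  ring

lemma hcoef_zero (a b c : ℝ) : hcoef a b c 0 = 1 := by
  simp [hcoef, risingFac_zero]

lemma hcoef_succ (a b c : ℝ) (hc : 0 < c) (n : ℕ) :
    hcoef a b c (n+1) = hcoef a b c n * ((a+n)*(b+n)/((c+n)*((n:ℝ)+1))) := by
  have h1 : risingFac c n ≠ 0 := ne_of_gt (risingFac_pos hc n)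
  have h5 : (n.factorial : ℝ) ≠ 0 := by exact_mod_cast n.factorial_ne_zero
  have h6 : (c:ℝ) + n ≠ 0 := by positivity
  have h7 : ((n:ℝ)+1) ≠ 0 := by positivity
  rw [hcoef, hcoef, risingFac_succ, risingFac_succ, risingFac_succ, Nat.factorial_succ]
  push_cast
  field_simp

lemma hcoef_pos {a b c : ℝ} (ha : 0 < a) (hb : 0 < b) (hc : 0 < c) (n : ℕ) :
    0 < hcoef a b c n := by
  have := risingFac_pos ha n; have := risingFac_pos hb n; have := risingFac_pos hc n
  have : (0:ℝ) < n.factorial := by exact_mod_cast n.factorial_pos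
  unfold hcoef; positivity

lemma hcoef_abs_succ (a b c : ℝ) (hc : 0 < c) (n : ℕ) :
    |hcoef a b c (n+1)| = |hcoef a b c n| * (|a+n| * |b+n| / ((c+n)*((n:ℝ)+1))) := by
  rw [hcoef_succ a b c hc n, abs_mul, abs_div, abs_mul, abs_mul]
  have h6 : (0:ℝ) < c + n := by positivity
  have h7 : (0:ℝ) < (n:ℝ)+1 := by positivity
  rw [abs_of_pos h6, abs_of_pos h7]

lemma hcoef_growth (a b c : ℝ) (hc : 0 < c) :
    ∃ K : ℕ, ∀ n : ℕ, |hcoef a b c n| ≤ ((n:ℝ)+1) ^ K := by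
  refine ⟨⌈|a| + |b| + |a| * |b| + |a| * |b|/c⌉₊, ?_⟩
  set K := ⌈|a| + |b| + |a| * |b| + |a| * |b|/c⌉₊ with hKdef
  have hK : |a| + |b| + |a| * |b| + |a| * |b|/c ≤ (K:ℝ) := Nat.le_ceil _
  have hab : 0 ≤ |a| * |b| := by positivity
  have habc : 0 ≤ |a| * |b|/c := by positivity
  have hKab : |a| + |b| ≤ (K:ℝ) := by linarith
  have hKc : |a| * |b| ≤ c * (K:ℝ) := by
    have h1 : |a| * |b|/c ≤ (K:ℝ) := by
      have := abs_nonneg a; have := abs_nonneg b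
      nlinarith [abs_nonneg a, abs_nonneg b]
    calc |a| * |b| = c * (|a| * |b|/c) := by field_simp
      _ ≤ c * K := by apply mul_le_mul_of_nonneg_left h1 (le_of_lt hc)
  intro n
  induction n with
  | zero => simp [hcoef_zero]
  | succ n ih =>
    rw [hcoef_abs_succ a b c hc n]
    have hr : |a+n| * |b+n| / ((c+n)*((n:ℝ)+1)) ≤ (((n:ℝ)+2)/((n:ℝ)+1)) ^ K := by
      have hb1 : (1 + 1/((n:ℝ)+1)) ^ K ≥ 1 + K * (1/((n:ℝ)+1)) := by
        apply one_add_mul_le_pow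
        have : (0:ℝ) < 1/((n:ℝ)+1) := by positivity
        linarith
      have heq : ((n:ℝ)+2)/((n:ℝ)+1) = 1 + 1/((n:ℝ)+1) := by
        field_simp
        ring
      rw [heq]
      have hnum : |a+n| * |b+n| ≤ (|a|+n)*(|b|+n) := by
        have h1 : |a+n| ≤ |a| + n := by
          calc |a+n| ≤ |a| + |(n:ℝ)| := abs_add_le _ _
            _ = |a| + n := by simp [Nat.abs_cast]
        have h2 : |b+n| ≤ |b| + n := by
          calc |b+n| ≤ |b| + |(n:ℝ)| := abs_add_le _ _
            _ = |b| + n := by simp [Nat.abs_cast]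
        exact mul_le_mul h1 h2 (abs_nonneg _) (by positivity)
      have hden : (0:ℝ) < (c+n)*((n:ℝ)+1) := by positivity
      rw [div_le_iff₀ hden]
      calc |a+n| * |b+n| ≤ (|a|+n)*(|b|+n) := hnum
        _ ≤ (c+n)*((n:ℝ)+1+K) := by
            nlinarith [mul_nonneg (sub_nonneg.2 hKab) (show (0:ℝ) ≤ (n:ℝ) from Nat.cast_nonneg n),
              hKc, hc, show (0:ℝ) ≤ (n:ℝ) from Nat.cast_nonneg n]
        _ = (c+n)*((n:ℝ)+1)*(1 + K*(1/((n:ℝ)+1))) := by field_simp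
        _ ≤ (1 + 1/((n:ℝ)+1)) ^ K * ((c+n)*((n:ℝ)+1)) := by nlinarith [hb1]
    calc |hcoef a b c n| * (|a+n| * |b+n| / ((c+n)*((n:ℝ)+1)))
        ≤ ((n:ℝ)+1) ^ K * ((((n:ℝ)+2)/((n:ℝ)+1)) ^ K) := by
          apply mul_le_mul ih hr (by positivity) (by positivity)
      _ = ((n:ℝ)+2) ^ K := by
          rw [← mul_pow]
          congr 1
          field_simp
      _ = ((((n+1):ℕ):ℝ)+1) ^ K := by congr 1; push_cast; ring

lemma hsummable_abs (a b c : ℝ) (hc : 0 < c) {z : ℝ} (hz : |z| < 1) :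
    Summable (fun n => |hcoef a b c n * z ^ n|) := by
  obtain ⟨K, hK⟩ := hcoef_growth a b c hc
  have hs1 : Summable (fun n : ℕ => ((n:ℝ) ^ K) * |z| ^ n) := by
    have := summable_pow_mul_geometric_of_norm_lt_one (R := ℝ) K (r := |z|) (by simpa using hz)
    simpa using this
  have hs2 : Summable (fun n : ℕ => |z| ^ n) := summable_geometric_of_lt_one (abs_nonneg z) hz
  have hs : Summable (fun n : ℕ => (2:ℝ)^K * ((n:ℝ) ^ K * |z| ^ n + |z| ^ n)) :=
    ((hs1.add hs2).mul_left _)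
  apply Summable.of_nonneg_of_le (fun n => abs_nonneg _) _ hs
  intro n
  have h1 : |hcoef a b c n * z ^ n| = |hcoef a b c n| * |z| ^ n := by
    rw [abs_mul, abs_pow]
  rw [h1]
  have h2 : ((n:ℝ)+1) ^ K ≤ (2:ℝ)^K * ((n:ℝ) ^ K + 1) := by
    rcases Nat.eq_zero_or_pos n with h | h
    · subst h; simp
      calc (1:ℝ) ≤ 2^K := one_le_pow₀ (by norm_num)
        _ ≤ 2^K * (0^K+1) := by
          rcases Nat.eq_zero_or_pos K with h' | h'
          · subst h'; norm_num
          · rw [zero_pow (by omega), zero_add, mul_one]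
    · have hn1 : (1:ℝ) ≤ (n:ℝ) := by exact_mod_cast h
      calc ((n:ℝ)+1) ^ K ≤ ((2:ℝ)*n) ^ K := by
            apply pow_le_pow_left₀ (by positivity) (by linarith)
        _ = 2^K * (n:ℝ)^K := mul_pow _ _ _
        _ ≤ 2^K * ((n:ℝ)^K + 1) := by
            have : (0:ℝ) < 2^K := by positivity
            nlinarith [this]
  calc |hcoef a b c n| * |z| ^ n ≤ ((n:ℝ)+1) ^ K * |z| ^ n := by
        apply mul_le_mul_of_nonneg_right (hK n) (by positivity)
    _ ≤ (2:ℝ)^K * ((n:ℝ) ^ K + 1) * |z| ^ n := by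
        apply mul_le_mul_of_nonneg_right h2 (by positivity)
    _ = (2:ℝ)^K * ((n:ℝ) ^ K * |z| ^ n + |z| ^ n) := by ring

lemma hsummable (a b c : ℝ) (hc : 0 < c) {z : ℝ} (hz : |z| < 1) :
    Summable (fun n => hcoef a b c n * z ^ n) :=
  (hsummable_abs a b c hc hz).of_abs

lemma hsummable_one (a b c : ℝ) (hc : 0 < c) (hs : 0 < c - a - b) :
    Summable (fun n => hcoef a b c n) := by
  obtain ⟨p, hpdef⟩ : ∃ p : ℝ, p = 1 + (c-a-b)/2 := ⟨_, rfl⟩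
  have hp : 1 ≤ p := by rw [hpdef]; linarith
  have hp1 : 1 < p := by rw [hpdef]; linarith
  obtain ⟨N, hNdef⟩ : ∃ N : ℕ, N = ⌈|a|⌉₊ + ⌈|b|⌉₊ + ⌈(2*(|a*b| + c*p))/(c-a-b)⌉₊ + 1 := ⟨_, rfl⟩
  have hN1 : 1 ≤ N := by omega
  -- the key one-step ratio estimate
  have step : ∀ n : ℕ, N ≤ n →
      |hcoef a b c (n+1)| * (((n:ℝ)+1)) ^ p ≤ |hcoef a b c n| * ((n:ℝ)) ^ p := by
    intro n hn
    have hnR : (N:ℝ) ≤ (n:ℝ) := by exact_mod_cast hn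
    have hn1 : (1:ℝ) ≤ (n:ℝ) := by
      have : (1:ℝ) ≤ (N:ℝ) := by exact_mod_cast hN1
      linarith
    have hna : |a| ≤ (n:ℝ) := by
      have h1 : |a| ≤ (⌈|a|⌉₊ : ℝ) := Nat.le_ceil _
      have h2 : ((⌈|a|⌉₊ : ℕ) : ℝ) ≤ (N:ℝ) := by exact_mod_cast (by omega : ⌈|a|⌉₊ ≤ N)
      linarith
    have hnb : |b| ≤ (n:ℝ) := by
      have h1 : |b| ≤ (⌈|b|⌉₊ : ℝ) := Nat.le_ceil _
      have h2 : ((⌈|b|⌉₊ : ℕ) : ℝ) ≤ (N:ℝ) := by exact_mod_cast (by omega : ⌈|b|⌉₊ ≤ N)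
      linarith
    have hnc : (2*(|a*b| + c*p))/(c-a-b) ≤ (n:ℝ) := by
      have h1 : (2*(|a*b| + c*p))/(c-a-b) ≤ (⌈(2*(|a*b| + c*p))/(c-a-b)⌉₊ : ℝ) := Nat.le_ceil _
      have h2 : ((⌈(2*(|a*b| + c*p))/(c-a-b)⌉₊ : ℕ) : ℝ) ≤ (N:ℝ) := by
        exact_mod_cast (by omega : ⌈(2*(|a*b| + c*p))/(c-a-b)⌉₊ ≤ N)
      linarith
    have habs_a : |a + n| = a + n := abs_of_nonneg (by cases abs_le.1 (le_refl |a|) with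
      | intro h1 h2 => linarith [neg_abs_le a])
    have habs_b : |b + n| = b + n := abs_of_nonneg (by linarith [neg_abs_le b])
    -- key polynomial inequality
    have hkey : (a+n)*(b+n) ≤ (c+n)*((n:ℝ)+1-p) := by
      have hnc' := hnc
      rw [div_le_iff₀ (by linarith : (0:ℝ) < c - a - b)] at hnc'
      have hmul : |a*b| + c*p ≤ (c-a-b)/2 * (n:ℝ) := by linarith
      have hpn : (n:ℝ)*p = (n:ℝ)*(1+(c-a-b)/2) := by rw [hpdef]
      nlinarith [hmul, hpn, le_abs_self (a*b), hc, sq_nonneg ((n:ℝ))]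
    -- Bernoulli for rpow
    have hbern : 1 - p/((n:ℝ)+1) ≤ ((n:ℝ)/((n:ℝ)+1)) ^ p := by
      have h := one_add_mul_self_le_rpow_one_add
        (show (-1:ℝ) ≤ -(1/((n:ℝ)+1)) by
          have : (0:ℝ) < 1/((n:ℝ)+1) := by positivity
          have h1 : 1/((n:ℝ)+1) ≤ 1 := by
            rw [div_le_one (by positivity)]; linarith
          linarith) hp
      have heq : (1:ℝ) + -(1/((n:ℝ)+1)) = (n:ℝ)/((n:ℝ)+1) := by
        field_simp
        ring
      rw [heq] at h
      calc 1 - p/((n:ℝ)+1) = 1 + p * -(1/((n:ℝ)+1)) := by ring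
        _ ≤ _ := h
    have hdiv : ((n:ℝ)/((n:ℝ)+1)) ^ p = ((n:ℝ))^p / (((n:ℝ)+1))^p :=
      Real.div_rpow (by positivity) (by positivity) p
    have hpow_pos : (0:ℝ) < (((n:ℝ)+1)) ^ p := Real.rpow_pos_of_pos (by positivity) p
    have hnp_nonneg : (0:ℝ) ≤ ((n:ℝ)) ^ p := Real.rpow_nonneg (by positivity) p
    -- combine
    rw [hcoef_abs_succ a b c hc n, habs_a, habs_b]
    have hratio : (a+n)*(b+n)/((c+n)*((n:ℝ)+1)) * (((n:ℝ)+1)) ^ p ≤ ((n:ℝ)) ^ p := by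
      have hden : (0:ℝ) < (c+n)*((n:ℝ)+1) := by positivity
      rw [div_mul_eq_mul_div, div_le_iff₀ hden]
      have hb2 : (1 - p/((n:ℝ)+1)) * (((n:ℝ)+1)) ^ p ≤ ((n:ℝ))^p := by
        calc (1 - p/((n:ℝ)+1)) * (((n:ℝ)+1)) ^ p
            ≤ (((n:ℝ)/((n:ℝ)+1)) ^ p) * (((n:ℝ)+1)) ^ p := by
              apply mul_le_mul_of_nonneg_right hbern (le_of_lt hpow_pos)
          _ = ((n:ℝ))^p / (((n:ℝ)+1))^p * (((n:ℝ)+1)) ^ p := by rw [hdiv]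
          _ = ((n:ℝ))^p := by field_simp
      calc (a+n)*(b+n) * (((n:ℝ)+1)) ^ p
          ≤ (c+n)*((n:ℝ)+1-p) * (((n:ℝ)+1)) ^ p := by
            apply mul_le_mul_of_nonneg_right hkey (le_of_lt hpow_pos)
        _ = (c+n) * ((1 - p/((n:ℝ)+1)) * (((n:ℝ)+1)) ^ p) * ((n:ℝ)+1) := by
            field_simp
        _ ≤ (c+n) * ((n:ℝ))^p * ((n:ℝ)+1) := by
            have h1 : (0:ℝ) ≤ c + n := by positivity
            have h2 : (0:ℝ) ≤ (n:ℝ)+1 := by positivity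
            apply mul_le_mul_of_nonneg_right _ h2
            apply mul_le_mul_of_nonneg_left hb2 h1
        _ = ((n:ℝ))^p * ((c+n)*((n:ℝ)+1)) := by ring
    calc |hcoef a b c n| * ((a+n)*(b+n)/((c+n)*((n:ℝ)+1))) * (((n:ℝ)+1)) ^ p
        = |hcoef a b c n| * ((a+n)*(b+n)/((c+n)*((n:ℝ)+1)) * (((n:ℝ)+1)) ^ p) := by ring
      _ ≤ |hcoef a b c n| * ((n:ℝ)) ^ p := by
          apply mul_le_mul_of_nonneg_left hratio (abs_nonneg _)
  -- decreasing majorant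
  have hmono : ∀ d : ℕ, |hcoef a b c (N+d)| * (((N+d : ℕ):ℝ)) ^ p
      ≤ |hcoef a b c N| * (((N:ℕ):ℝ)) ^ p := by
    intro d
    induction d with
    | zero => simp
    | succ d ih =>
      have h := step (N+d) (by omega)
      have : ((N + (d+1) : ℕ) : ℝ) = ((N+d : ℕ):ℝ) + 1 := by push_cast; ring
      rw [show N + (d+1) = (N+d) + 1 by omega]
      calc |hcoef a b c ((N+d)+1)| * ((((N+d)+1 : ℕ):ℝ)) ^ p
          = |hcoef a b c ((N+d)+1)| * ((((N+d):ℕ):ℝ)+1) ^ p := by push_cast; ring_nf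
        _ ≤ |hcoef a b c (N+d)| * (((N+d : ℕ):ℝ)) ^ p := h
        _ ≤ _ := ih
  -- conclude summability
  rw [← summable_nat_add_iff N]
  set C := |hcoef a b c N| * (((N:ℕ):ℝ)) ^ p with hCdef
  have hsum_g : Summable (fun n : ℕ => C * (((n+N : ℕ):ℝ)) ^ (-p)) := by
    have h0 : Summable (fun n : ℕ => ((n:ℝ)) ^ (-p)) :=
      Real.summable_nat_rpow.2 (by linarith)
    exact ((summable_nat_add_iff N).2 h0).mul_left C
  apply Summable.of_norm_bounded hsum_g
  intro n
  have hnN : N ≤ n + N := by omega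
  have hpos : (0:ℝ) < ((n+N : ℕ):ℝ) := by
    have : (0:ℕ) < n + N := by omega
    exact_mod_cast this
  have hM := hmono n
  rw [show N + n = n + N by omega] at hM
  have hrpow_pos : (0:ℝ) < (((n+N:ℕ)):ℝ) ^ p := Real.rpow_pos_of_pos hpos p
  have : |hcoef a b c (n+N)| ≤ C * (((n+N:ℕ)):ℝ) ^ (-p) := by
    rw [Real.rpow_neg (le_of_lt hpos)]
    calc |hcoef a b c (n+N)| = |hcoef a b c (n+N)| * (((n+N:ℕ)):ℝ) ^ p * ((((n+N:ℕ)):ℝ) ^ p)⁻¹ := by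
          field_simp
      _ ≤ C * ((((n+N:ℕ)):ℝ) ^ p)⁻¹ := by
          apply mul_le_mul_of_nonneg_right hM (by positivity)
  simpa using this

lemma risingFac_one (n : ℕ) : risingFac 1 n = (n.factorial : ℝ) := by
  induction n with
  | zero => simp [risingFac_zero]
  | succ n ih => rw [risingFac_succ, ih, Nat.factorial_succ]; push_cast; ring

lemma hcoef_one (s : ℝ) (n : ℕ) : hcoef s 1 1 n = risingFac s n / (n.factorial : ℝ) := by
  rw [hcoef, risingFac_one]
  have h : (n.factorial : ℝ) ≠ 0 := by exact_mod_cast n.factorial_ne_zero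
  field_simp

lemma hyp2F1_eq_tsum (a b c z : ℝ) : hyp2F1 a b c z = ∑' n, hcoef a b c n * z ^ n := rfl

/-- Euler-transform product identity via the Pfaff–Saalschütz / Vandermonde convolution. -/
lemma euler_product (a b c : ℝ) (hc : 0 < c) {z : ℝ} (hz : |z| < 1) :
    hyp2F1 a b c z * (∑' n, hcoef (c-a-b) 1 1 n * z ^ n)
      = hyp2F1 (c-a) (c-b) c z := by
  rw [hyp2F1_eq_tsum, hyp2F1_eq_tsum]
  have h1 : Summable (fun n => ‖hcoef a b c n * z ^ n‖) := by
    simpa only [Real.norm_eq_abs] using hsummable_abs a b c hc hz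
  have h2 : Summable (fun n => ‖hcoef (c-a-b) 1 1 n * z ^ n‖) := by
    simpa only [Real.norm_eq_abs] using hsummable_abs (c-a-b) 1 1 one_pos hz
  rw [tsum_mul_tsum_eq_tsum_sum_antidiagonal_of_summable_norm h1 h2]
  apply tsum_congr
  intro n
  have : ∀ p ∈ Finset.HasAntidiagonal.antidiagonal n,
      (hcoef a b c p.1 * z ^ p.1) * (hcoef (c-a-b) 1 1 p.2 * z ^ p.2)
        = (hcoef a b c p.1 * (risingFac (c-a-b) p.2 / (p.2.factorial : ℝ))) * z ^ n := by
    intro p hp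
    have hpn : p.1 + p.2 = n := Finset.HasAntidiagonal.mem_antidiagonal.mp hp
    rw [hcoef_one, ← hpn, pow_add]
    ring
  rw [Finset.sum_congr rfl this, ← Finset.sum_mul, saal_div a b c hc n]

lemma tsum_ge_one {a b c z : ℝ} (ha : 0 < a) (hb : 0 < b) (hc : 0 < c) (hz0 : 0 ≤ z)
    (hz : |z| < 1) : 1 ≤ ∑' n, hcoef a b c n * z ^ n := by
  have hsum := hsummable a b c hc hz
  have h0 : hcoef a b c 0 * z ^ 0 = 1 := by simp [hcoef_zero]
  calc (1:ℝ) = hcoef a b c 0 * z ^ 0 := h0.symm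
    _ ≤ ∑' n, hcoef a b c n * z ^ n := by
        apply Summable.le_tsum hsum 0
        intro j _
        have := hcoef_pos ha hb hc j
        positivity

set_option maxHeartbeats 1000000 in
/-- Uniform coefficientwise lower bound `ε · (s)ₙ/n! ≤ (c−a)ₙ(c−b)ₙ/((c)ₙ n!)`. -/
lemma coef_lower (a b c : ℝ) (hc : 0 < c) (hca : 0 < c-a) (hcb : 0 < c-b)
    (hs : 0 < c-a-b) :
    ∃ ε : ℝ, 0 < ε ∧ ∀ n : ℕ, ε * hcoef (c-a-b) 1 1 n ≤ hcoef (c-a) (c-b) c n := by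
  set s := c - a - b with hsdef
  set g : ℕ → ℝ := hcoef (c-a) (c-b) c with hgdef
  set u : ℕ → ℝ := hcoef s 1 1 with hudef
  have hgpos : ∀ n, 0 < g n := fun n => hcoef_pos hca hcb hc n
  have hupos : ∀ n, 0 < u n := fun n => hcoef_pos hs one_pos one_pos n
  set q : ℕ → ℝ := fun n => g n / u n with hqdef
  have hqpos : ∀ n, 0 < q n := fun n => div_pos (hgpos n) (hupos n)
  have hq0 : q 0 = 1 := by simp [hqdef, hgdef, hudef, hcoef_zero]
  have hqsucc : ∀ n : ℕ, q (n+1) = q n * ((c-a+n)*(c-b+n)/((c+n)*(s+n))) := by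
    intro n
    have hg := hcoef_succ (c-a) (c-b) c hc n
    have hu := hcoef_succ s 1 1 one_pos n
    have h1 : ((n:ℝ)+1) ≠ 0 := by positivity
    have h2 : (c:ℝ)+n ≠ 0 := by positivity
    have h3 : (s:ℝ)+n ≠ 0 := by positivity
    have h4 : (1:ℝ)+n ≠ 0 := by positivity
    have hun := (hupos n).ne'
    have hun1 := (hupos (n+1)).ne'
    simp only [hqdef, hgdef, hudef]
    rw [hg, hu]
    field_simp
  have hkey : ∀ n : ℕ, (c-a+n)*(c-b+n) = (c+n)*(s+n) + a*b := by
    intro n; rw [hsdef]; ring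
  rcases le_or_gt 0 (a*b) with hab | hab
  · -- increasing case
    refine ⟨1, one_pos, ?_⟩
    have hmono : ∀ n, 1 ≤ q n := by
      intro n
      induction n with
      | zero => rw [hq0]
      | succ n ih =>
        rw [hqsucc n]
        have hden : (0:ℝ) < (c+n)*(s+n) := by positivity
        have hrat : 1 ≤ (c-a+n)*(c-b+n)/((c+n)*(s+n)) := by
          rw [le_div_iff₀ hden, one_mul, hkey n]
          linarith
        nlinarith [hqpos n]
    intro n
    have := hmono n
    rw [hqdef] at this
    simp only at this
    rw [le_div_iff₀ (hupos n)] at this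
    linarith [this]
  · -- decreasing case
    set w := -(a*b) with hwdef
    have hw : 0 < w := by simp [hwdef]; linarith
    set m := min c s with hmdef
    have hm : 0 < m := lt_min hc hs
    obtain ⟨N, hNdef⟩ : ∃ N : ℕ, N = ⌈2*w⌉₊ + 1 := ⟨_, rfl⟩
    have hN2w : 2*w ≤ (N:ℝ) - 1 := by
      rw [hNdef]
      push_cast
      have := Nat.le_ceil (2*w)
      linarith
    have hN1 : (1:ℝ) ≤ (N:ℝ) := by
      have : 1 ≤ N := by omega
      exact_mod_cast this
    -- ratio ≤ 1 and > 0
    have hrat_pos : ∀ n : ℕ, 0 < (c-a+n)*(c-b+n)/((c+n)*(s+n)) := by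
      intro n
      have h1 : (0:ℝ) < c-a+n := by positivity
      have h2 : (0:ℝ) < c-b+n := by positivity
      have h3 : (0:ℝ) < (c+n)*(s+n) := by positivity
      positivity
    have hanti : ∀ n : ℕ, q (n+1) ≤ q n := by
      intro n
      rw [hqsucc n]
      have hden : (0:ℝ) < (c+n)*(s+n) := by positivity
      have hrat : (c-a+n)*(c-b+n)/((c+n)*(s+n)) ≤ 1 := by
        rw [div_le_one hden, hkey n]
        linarith
      nlinarith [hqpos n, hrat_pos n]
    have hanti' : ∀ k d : ℕ, q (k+d) ≤ q k := by
      intro k d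
      induction d with
      | zero => simp
      | succ d ih => calc q (k+(d+1)) = q ((k+d)+1) := by ring_nf
                       _ ≤ q (k+d) := hanti (k+d)
                       _ ≤ q k := ih
    -- Weierstrass-type invariant
    have hinv : ∀ d : ℕ, q N * (1 - w * (1/(m+(N:ℝ)-1) - 1/(m+(N:ℝ)+d-1))) ≤ q (N+d) := by
      intro d
      induction d with
      | zero => simp
      | succ d ih =>
        have hT0 : (0:ℝ) < m+(N:ℝ)-1 := by linarith
        have hTd : (0:ℝ) < m+(N:ℝ)+d-1 := by
          have : (0:ℝ) ≤ (d:ℝ) := Nat.cast_nonneg d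
          linarith
        have hTd1 : (0:ℝ) < m+(N:ℝ)+d := by linarith
        have hstep : q (N+(d+1)) = q (N+d) * ((c-a+(N+d:ℕ))*(c-b+(N+d:ℕ))/((c+(N+d:ℕ))*(s+(N+d:ℕ)))) := by
          rw [show N+(d+1) = (N+d)+1 by omega, hqsucc (N+d)]
        -- the ratio is ≥ 1 - w * (1/(m+N+d-1) - 1/(m+N+d))
        have hcN : m + (N:ℝ) + d - 1 ≤ c + (N+d:ℕ) := by
          push_cast
          have : m ≤ c := min_le_left _ _
          linarith
        have hsN : m + (N:ℝ) + d ≤ s + (N+d:ℕ) := by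
          push_cast
          have : m ≤ s := min_le_right _ _
          linarith
        have hratio_ge : 1 - w/((c+(N+d:ℕ))*(s+(N+d:ℕ)))
            = (c-a+(N+d:ℕ))*(c-b+(N+d:ℕ))/((c+(N+d:ℕ))*(s+(N+d:ℕ))) := by
          have hden : ((c+(N+d:ℕ))*(s+(N+d:ℕ))) ≠ 0 := by positivity
          rw [eq_div_iff hden, hkey (N+d)]
          field_simp
          ring
        -- abbreviations
        set X := w * (1/(m+(N:ℝ)-1) - 1/(m+(N:ℝ)+d-1)) with hX
        set Y := w/((c+(N+d:ℕ))*(s+(N+d:ℕ))) with hY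
        have hXnn : 0 ≤ X := by
          rw [hX]
          have : 1/(m+(N:ℝ)+d-1) ≤ 1/(m+(N:ℝ)-1) := by
            apply one_div_le_one_div_of_le hT0
            have : (0:ℝ) ≤ (d:ℝ) := Nat.cast_nonneg d
            linarith
          nlinarith [hw]
        have hYnn : 0 ≤ Y := by
          rw [hY]; positivity
        have hqN : 0 < q N := hqpos N
        have hXhalf : X ≤ 1/2 := by
          rw [hX]
          have h1 : 1/(m+(N:ℝ)-1) ≤ 1/(2*w) := by
            apply one_div_le_one_div_of_le (by positivity)
            linarith
          have h2 : (0:ℝ) ≤ 1/(m+(N:ℝ)+d-1) := by positivity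
          have h3 : w * (1/(m+(N:ℝ)-1) - 1/(m+(N:ℝ)+d-1)) ≤ w * (1/(2*w)) := by
            apply mul_le_mul_of_nonneg_left _ (le_of_lt hw)
            linarith
          have h4 : w * (1/(2*w)) = 1/2 := by field_simp; try ring
          linarith
        calc q N * (1 - w * (1/(m+(N:ℝ)-1) - 1/(m+(N:ℝ)+(d+1:ℕ)-1)))
            ≤ q N * ((1 - X) * (1 - Y)) := by
              apply mul_le_mul_of_nonneg_left _ (le_of_lt hqN)
              have hExp : (1-X)*(1-Y) = 1 - X - Y + X*Y := by ring
              rw [hExp]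
              have hXY : 0 ≤ X*Y := mul_nonneg hXnn hYnn
              have hcast : ((d+1:ℕ):ℝ) = (d:ℝ)+1 := by push_cast; ring
              rw [hcast]
              have : w * (1/(m+(N:ℝ)-1) - 1/(m+(N:ℝ)+((d:ℝ)+1)-1)) ≥ X + Y := by
                rw [hX, hY]
                have hexpand : w * (1/(m+(N:ℝ)-1) - 1/(m+(N:ℝ)+((d:ℝ)+1)-1))
                    - w * (1/(m+(N:ℝ)-1) - 1/(m+(N:ℝ)+d-1))
                    = w * (1/(m+(N:ℝ)+d-1) - 1/(m+(N:ℝ)+(d:ℝ))) := by ring_nf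
                have hEd' : w/((c+(N+d:ℕ))*(s+(N+d:ℕ)))
                    ≤ w * (1/(m+(N:ℝ)+d-1) - 1/(m+(N:ℝ)+d)) := by
                  calc w/((c+(N+d:ℕ))*(s+(N+d:ℕ)))
                      = w * (1/((c+(N+d:ℕ))*(s+(N+d:ℕ)))) := by ring
                    _ ≤ w * (1/(m+(N:ℝ)+d-1) - 1/(m+(N:ℝ)+d)) := by
                        apply mul_le_mul_of_nonneg_left _ (le_of_lt hw)
                        have heq2 : 1/(m+(N:ℝ)+d-1) - 1/(m+(N:ℝ)+d)
                            = 1/((m+(N:ℝ)+d-1)*(m+(N:ℝ)+d)) := by field_simp; try ring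
                        rw [heq2]
                        apply one_div_le_one_div_of_le (by positivity)
                        have hcpos : (0:ℝ) < c + (N+d:ℕ) := by positivity
                        exact mul_le_mul hcN hsN (le_of_lt hTd1) (le_of_lt hcpos)
                linarith [hexpand, hEd']
              linarith
          _ = (q N * (1 - X)) * (1-Y) := by ring
          _ ≤ q (N+d) * (1-Y) := by
              apply mul_le_mul_of_nonneg_right _ _
              · exact ih
              · -- 1 - Y ≥ 0
                have : Y ≤ 1/2 := by
                  rw [hY]
                  have h1 : 2*w ≤ (c+(N+d:ℕ))*(s+(N+d:ℕ)) := by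
                    have hcpos : (1:ℝ) ≤ c + (N+d:ℕ) := by
                      have : (0:ℝ) ≤ ((N+d:ℕ):ℝ) := Nat.cast_nonneg _
                      have hNr : (N:ℝ) ≤ ((N+d:ℕ):ℝ) := by exact_mod_cast Nat.le_add_right N d
                      nlinarith [hc]
                    have hspos2 : 2*w ≤ s + ((N+d:ℕ):ℝ) := by
                      have hNr : (N:ℝ) ≤ ((N+d:ℕ):ℝ) := by exact_mod_cast Nat.le_add_right N d
                      linarith [hs]
                    nlinarith [hspos2, hcpos, hw]
                  rw [div_le_div_iff₀ (by positivity) (by norm_num : (0:ℝ) < 2)]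
                  linarith
                linarith
          _ ≤ q (N+(d+1)) := le_of_eq (by rw [hstep, ← hratio_ge])
    -- final ε
    refine ⟨q N / 2, div_pos (hqpos N) two_pos, ?_⟩
    have hlow : ∀ n, q N / 2 ≤ q n := by
      intro n
      rcases le_or_gt N n with h | h
      · obtain ⟨d, rfl⟩ : ∃ d, n = N + d := ⟨n - N, by omega⟩
        have := hinv d
        have hT0 : (0:ℝ) < m+(N:ℝ)-1 := by linarith
        have hTd : (0:ℝ) < m+(N:ℝ)+d-1 := by
          have : (0:ℝ) ≤ (d:ℝ) := Nat.cast_nonneg d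
          linarith
        have hXhalf : w * (1/(m+(N:ℝ)-1) - 1/(m+(N:ℝ)+d-1)) ≤ 1/2 := by
          have h1 : 1/(m+(N:ℝ)-1) ≤ 1/(2*w) := by
            apply one_div_le_one_div_of_le (by positivity)
            linarith
          have h2 : (0:ℝ) ≤ 1/(m+(N:ℝ)+d-1) := by positivity
          have h3 : w * (1/(m+(N:ℝ)-1) - 1/(m+(N:ℝ)+d-1)) ≤ w * (1/(2*w)) := by
            apply mul_le_mul_of_nonneg_left _ (le_of_lt hw)
            linarith
          have h4 : w * (1/(2*w)) = 1/2 := by field_simp; try ring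
          linarith
        have hqN := hqpos N
        nlinarith [this, hXhalf, hqN, mul_le_mul_of_nonneg_left hXhalf (le_of_lt hqN)]
      · obtain ⟨d, rfl⟩ : ∃ d, N = n + d := ⟨N - n, by omega⟩
        have := hanti' n d
        have := hqpos (n+d)
        linarith [this, hanti' n d]
    intro n
    have := hlow n
    rw [hqdef] at this
    simp only at this
    rw [le_div_iff₀ (hupos n)] at this
    linarith

theorem hyp2F1_pos (a b c : ℝ) (hc : 0 < c) (hca : 0 < c-a) (hcb : 0 < c-b)
    (hs : 0 < c-a-b) : ∀ z : ℝ, 0 ≤ z → z ≤ 1 → 0 < hyp2F1 a b c z := by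
  obtain ⟨ε, hε, hεn⟩ := coef_lower a b c hc hca hcb hs
  have key : ∀ z : ℝ, 0 ≤ z → z < 1 → ε ≤ hyp2F1 a b c z := by
    intro z hz0 hz1
    have hzabs : |z| < 1 := by rwa [abs_of_nonneg hz0]
    have hK1 : 1 ≤ ∑' n, hcoef (c-a-b) 1 1 n * z ^ n :=
      tsum_ge_one hs one_pos one_pos hz0 hzabs
    have hFK := euler_product a b c hc hzabs
    have hGK : ε * (∑' n, hcoef (c-a-b) 1 1 n * z ^ n) ≤ hyp2F1 (c-a) (c-b) c z := by
      rw [hyp2F1_eq_tsum, ← tsum_mul_left]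
      apply Summable.tsum_le_tsum _ ((hsummable (c-a-b) 1 1 one_pos hzabs).mul_left ε)
        (hsummable (c-a) (c-b) c hc hzabs)
      intro n
      calc ε * (hcoef (c-a-b) 1 1 n * z ^ n) = (ε * hcoef (c-a-b) 1 1 n) * z ^ n := by ring
        _ ≤ hcoef (c-a) (c-b) c n * z ^ n :=
            mul_le_mul_of_nonneg_right (hεn n) (pow_nonneg hz0 n)
    have hKpos : (0:ℝ) < ∑' n, hcoef (c-a-b) 1 1 n * z ^ n := lt_of_lt_of_le one_pos hK1
    have h2 : ε * (∑' n, hcoef (c-a-b) 1 1 n * z ^ n)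
        ≤ hyp2F1 a b c z * (∑' n, hcoef (c-a-b) 1 1 n * z ^ n) := by
      rw [hFK]; exact hGK
    exact le_of_mul_le_mul_right h2 hKpos
  intro z hz0 hz1
  rcases lt_or_eq_of_le hz1 with h | h
  · exact lt_of_lt_of_le hε (key z hz0 h)
  · subst h
    have hA : Summable (fun n => hcoef a b c n) := hsummable_one a b c hc hs
    have habel := Real.tendsto_tsum_powerSeries_nhdsWithin_lt (hA.hasSum.tendsto_sum_nat)
    have hev : ∀ᶠ y in nhdsWithin (1:ℝ) (Set.Iio 1), ε ≤ ∑' n, hcoef a b c n * y ^ n := by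
      apply Filter.eventually_of_mem (Ioo_mem_nhdsLT (by norm_num : (0:ℝ) < 1))
      intro y hy
      have := key y (le_of_lt hy.1) hy.2
      rwa [hyp2F1_eq_tsum] at this
    have hlim : ε ≤ ∑' n, hcoef a b c n := ge_of_tendsto habel hev
    have heq : hyp2F1 a b c 1 = ∑' n, hcoef a b c n := by
      rw [hyp2F1_eq_tsum]
      apply tsum_congr
      intro n
      rw [one_pow, mul_one]
    rw [heq]
    exact lt_of_lt_of_le hε hlim


/-- positivity of the Coulomb gas integrals `ν²Z_a + νZ_b` and
`νZ_a + ν²Z_b` when `cos(4π/κ) < 0` (equivalently `ν(κ) > 0`). -/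
theorem statement1 (κ : ℝ) (hκ : κ ∈ Set.Ioo (0:ℝ) 8)
    (hcos : Real.cos (4 * Real.pi / κ) < 0)
    (x₁ x₂ x₃ x₄ : ℝ) (h12 : x₁ < x₂) (h23 : x₂ < x₃) (h34 : x₃ < x₄) :
    0 < nuParam κ ^ 2 * Za κ x₁ x₂ x₃ x₄ + nuParam κ * Zb κ x₁ x₂ x₃ x₄ ∧
    0 < nuParam κ * Za κ x₁ x₂ x₃ x₄ + nuParam κ ^ 2 * Zb κ x₁ x₂ x₃ x₄ := by
  obtain ⟨hκ0, hκ8⟩ := hκ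
  have hc : (0:ℝ) < 8/κ := by positivity
  have hca : (0:ℝ) < 8/κ - 4/κ := by
    have : 8/κ - 4/κ = 4/κ := by ring
    rw [this]; positivity
  have hcb : (0:ℝ) < 8/κ - (1 - 4/κ) := by
    have h12 : (1:ℝ) < 12/κ := (one_lt_div hκ0).2 (by linarith)
    have : 8/κ - (1 - 4/κ) = 12/κ - 1 := by ring
    rw [this]; linarith
  have hs : (0:ℝ) < 8/κ - 4/κ - (1 - 4/κ) := by
    have h8 : (1:ℝ) < 8/κ := (one_lt_div hκ0).2 (by linarith)
    have : 8/κ - 4/κ - (1 - 4/κ) = 8/κ - 1 := by ring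
    rw [this]; linarith
  have hpos := hyp2F1_pos (4/κ) (1 - 4/κ) (8/κ) hc hca hcb hs
  have h13 : (0:ℝ) < x₃ - x₁ := by linarith
  have h24 : (0:ℝ) < x₄ - x₂ := by linarith
  have h14 : (0:ℝ) < x₄ - x₁ := by linarith
  have h23' : (0:ℝ) < x₃ - x₂ := by linarith
  have h12' : (0:ℝ) < x₂ - x₁ := by linarith
  have h34' : (0:ℝ) < x₄ - x₃ := by linarith
  have hχ0 : 0 < crossRatio x₁ x₂ x₃ x₄ := by
    rw [crossRatio]
    exact div_pos (mul_pos h12' h34') (mul_pos h13 h24)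
  have hχ1 : crossRatio x₁ x₂ x₃ x₄ < 1 := by
    rw [crossRatio, div_lt_one (mul_pos h13 h24)]
    nlinarith [mul_pos h23' h14]
  have hF1 : 0 < hyp2F1 (4/κ) (1 - 4/κ) (8/κ) 1 := hpos 1 zero_le_one le_rfl
  have hFχ : 0 < hyp2F1 (4/κ) (1 - 4/κ) (8/κ) (crossRatio x₁ x₂ x₃ x₄) :=
    hpos _ (le_of_lt hχ0) (le_of_lt hχ1)
  have hF1χ : 0 < hyp2F1 (4/κ) (1 - 4/κ) (8/κ) (1 - crossRatio x₁ x₂ x₃ x₄) :=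
    hpos _ (by linarith) (by linarith)
  have hZa : 0 < Za κ x₁ x₂ x₃ x₄ := by
    rw [Za]
    have r1 : (0:ℝ) < (x₂ - x₁) ^ (-(2 * hParam κ)) := Real.rpow_pos_of_pos h12' _
    have r2 : (0:ℝ) < (x₄ - x₃) ^ (-(2 * hParam κ)) := Real.rpow_pos_of_pos h34' _
    have r3 : (0:ℝ) < (1 - crossRatio x₁ x₂ x₃ x₄) ^ (2/κ) :=
      Real.rpow_pos_of_pos (by linarith) _
    exact mul_pos (mul_pos (mul_pos r1 r2) r3) (div_pos hF1χ hF1)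
  have hZb : 0 < Zb κ x₁ x₂ x₃ x₄ := by
    rw [Zb]
    have r1 : (0:ℝ) < (x₄ - x₁) ^ (-(2 * hParam κ)) := Real.rpow_pos_of_pos h14 _
    have r2 : (0:ℝ) < (x₃ - x₂) ^ (-(2 * hParam κ)) := Real.rpow_pos_of_pos h23' _
    have r3 : (0:ℝ) < (crossRatio x₁ x₂ x₃ x₄) ^ (2/κ) := Real.rpow_pos_of_pos hχ0 _
    exact mul_pos (mul_pos (mul_pos r1 r2) r3) (div_pos hFχ hF1)
  have hν : 0 < nuParam κ := by
    rw [nuParam]; linarith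
  constructor
  · exact add_pos (mul_pos (pow_pos hν 2) hZa) (mul_pos hν hZb)
  · exact add_pos (mul_pos hν hZa) (mul_pos (pow_pos hν 2) hZb)
end

section
/- Fix κ ∈ (0,8) and real numbers ξ < x₃ < x₄. Then, as (x₁,x₂) → (ξ,ξ) with x₁ < x₂ (< x₃), the ratio Z_b^(κ)(x₁,x₂,x₃,x₄)/(x₂−x₁)^{2/κ} converges to Z₃^(κ)(ξ,x₃,x₄); equivalently, Z_b^(κ)(x₁,x₂,x₃,x₄) = (x₂−x₁)^{2/κ} Z₃^(κ)(ξ,x₃,x₄) + o((x₂−x₁)^{2/κ}) as x₁, x₂ → ξ. -/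
lemma abs_risingFac_le (q : ℝ) (n : ℕ) :
    |risingFac q n| ≤ (|q| + 1) ^ n * (Nat.factorial n : ℝ) := by
  rw [risingFac, Finset.abs_prod]
  have h1 : ∀ i ∈ Finset.range n, |q + (i : ℝ)| ≤ (|q| + 1) * ((i : ℝ) + 1) := by
    intro i _
    have := abs_add_le q (i : ℝ)
    have hi : |(i : ℝ)| = (i : ℝ) := abs_of_nonneg (Nat.cast_nonneg i)
    have h0 : (0:ℝ) ≤ |q| := abs_nonneg q
    have h0i : (0:ℝ) ≤ (i:ℝ) := Nat.cast_nonneg i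
    nlinarith
  calc ∏ i ∈ Finset.range n, |q + (i : ℝ)|
      ≤ ∏ i ∈ Finset.range n, (|q| + 1) * ((i : ℝ) + 1) :=
        Finset.prod_le_prod (fun i _ => abs_nonneg _) h1
    _ = (|q| + 1) ^ n * (Nat.factorial n : ℝ) := by
        rw [Finset.prod_mul_distrib, Finset.prod_const, Finset.card_range]
        congr 1
        clear h1
        induction n with
        | zero => simp
        | succ m ih => rw [Finset.prod_range_succ, ih, Nat.factorial_succ]; push_cast; ring

lemma risingFac_pos_s3 {c : ℝ} (hc : 0 < c) (n : ℕ) : 0 < risingFac c n :=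
  Finset.prod_pos (fun i _ => by positivity)

lemma risingFac_ge {c : ℝ} (hc : 0 < c) (n : ℕ) :
    c * (Nat.factorial n : ℝ) ≤ risingFac c (n + 1) := by
  induction n with
  | zero => simp [risingFac]
  | succ m ih =>
    rw [risingFac, Finset.prod_range_succ, ← risingFac]
    have hp : 0 < risingFac c (m + 1) := risingFac_pos_s3 hc _
    have h2 : ((m : ℝ) + 1) ≤ c + ((m + 1 : ℕ) : ℝ) := by push_cast; linarith
    calc c * ((m+1).factorial : ℝ) = (c * (m.factorial : ℝ)) * ((m:ℝ) + 1) := by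
          rw [Nat.factorial_succ]; push_cast; ring
      _ ≤ risingFac c (m+1) * (c + ((m + 1 : ℕ) : ℝ)) := by
          apply mul_le_mul ih h2 (by positivity) hp.le

lemma hyp_coef_bound (a b c : ℝ) (hc : 0 < c) (n : ℕ) (z : ℝ)
    (hz : |z| ≤ 1 / (2 * (|a| + 1) * (|b| + 1))) :
    |risingFac a n * risingFac b n / (risingFac c n * (Nat.factorial n : ℝ)) * z ^ n|
      ≤ (1 + 1/c) * ((n : ℝ) + 1) * (1/2) ^ n := by
  set A := |a| + 1 with hA
  set B := |b| + 1 with hB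
  have hA0 : (0:ℝ) < A := by positivity
  have hB0 : (0:ℝ) < B := by positivity
  set ρ := 1 / (2 * A * B) with hρ
  have hρ0 : (0:ℝ) < ρ := by positivity
  cases n with
  | zero => simp [risingFac]; positivity
  | succ m =>
    set n := m + 1
    have hrc : 0 < risingFac c n := risingFac_pos_s3 hc n
    have hfac : (0:ℝ) < (n.factorial : ℝ) := by positivity
    have hnum : |risingFac a n * risingFac b n| ≤ A ^ n * B ^ n * ((n.factorial : ℝ))^2 := by
      rw [abs_mul]
      calc |risingFac a n| * |risingFac b n|
          ≤ (A ^ n * (n.factorial : ℝ)) * (B ^ n * (n.factorial : ℝ)) :=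
            mul_le_mul (abs_risingFac_le a n) (abs_risingFac_le b n) (abs_nonneg _)
              (by positivity)
        _ = A ^ n * B ^ n * ((n.factorial : ℝ))^2 := by ring
    have hden : c * (m.factorial : ℝ) * (n.factorial : ℝ) ≤ risingFac c n * (n.factorial : ℝ) := by
      apply mul_le_mul_of_nonneg_right (risingFac_ge hc m) hfac.le
    have hden0 : (0:ℝ) < c * (m.factorial : ℝ) * (n.factorial : ℝ) := by positivity
    have hz' : |z| ^ n ≤ ρ ^ n := pow_le_pow_left₀ (abs_nonneg z) hz n
    rw [abs_mul, abs_div, abs_pow, abs_of_pos (by positivity : (0:ℝ) < risingFac c n * (n.factorial : ℝ))]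
    have step1 : |risingFac a n * risingFac b n| / (risingFac c n * (n.factorial : ℝ)) * |z| ^ n
        ≤ (A ^ n * B ^ n * ((n.factorial : ℝ))^2) / (c * (m.factorial : ℝ) * (n.factorial : ℝ)) * ρ ^ n := by
      apply mul_le_mul _ hz' (by positivity) (by positivity)
      exact div_le_div₀ (by positivity) hnum hden0 hden
    refine step1.trans ?_
    have hfs : (n.factorial : ℝ) = ((m:ℝ)+1) * (m.factorial : ℝ) := by
      rw [Nat.factorial_succ]; push_cast; ring
    have hABρ : A * B * ρ = 1/2 := by
      rw [hρ, mul_one_div, div_eq_iff (by positivity)]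
      ring
    have : (A ^ n * B ^ n * ((n.factorial : ℝ))^2) / (c * (m.factorial : ℝ) * (n.factorial : ℝ)) * ρ ^ n
        = (1/2)^n * (((m:ℝ)+1) / c) := by
      rw [← hABρ]
      rw [mul_pow, mul_pow]
      rw [hfs]
      field_simp
    rw [this]
    have h1 : ((m:ℝ)+1)/c ≤ (1 + 1/c) * ((n:ℝ) + 1) := by
      have hmn : ((m:ℝ)+1) ≤ ((n:ℝ)+1) := by push_cast [n]; linarith
      have hcc : 1/c * c = 1 := by field_simp
      rw [div_le_iff₀ hc]
      nlinarith [hmn, hcc, hc.le]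
    calc (1/2:ℝ)^n * (((m:ℝ)+1)/c) ≤ (1/2)^n * ((1+1/c)*((n:ℝ)+1)) := by
          apply mul_le_mul_of_nonneg_left h1 (by positivity)
      _ = (1+1/c)*((n:ℝ)+1)*(1/2)^n := by ring

lemma hyp2F1_zero (a b c : ℝ) : hyp2F1 a b c 0 = 1 := by
  unfold hyp2F1
  rw [tsum_eq_single 0]
  · simp [risingFac]
  · intro n hn
    simp [zero_pow hn]

lemma hyp2F1_tendsto_zero (a b c : ℝ) (hc : 0 < c) :
    Filter.Tendsto (hyp2F1 a b c) (nhds 0) (nhds 1) := by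
  set ρ := 1 / (2 * (|a| + 1) * (|b| + 1)) with hρ
  have hρ0 : (0:ℝ) < ρ := by positivity
  have hsum : Summable (fun n : ℕ => (1 + 1/c) * ((n:ℝ) + 1) * (1/2) ^ n) := by
    have h1 : Summable (fun n : ℕ => (n:ℝ) * (1/2) ^ n) := by
      have := summable_pow_mul_geometric_of_norm_lt_one (R := ℝ) 1
        (r := 1/2) (by rw [Real.norm_eq_abs]; rw [abs_of_pos]; norm_num; norm_num)
      simpa using this
    have h2 : Summable (fun n : ℕ => (1/2:ℝ) ^ n) :=
      summable_geometric_of_lt_one (by norm_num) (by norm_num)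
    have := (h1.add h2).mul_left (1 + 1/c)
    apply this.congr
    intro n; ring
  have hcont : ContinuousOn (fun z => hyp2F1 a b c z) (Metric.closedBall 0 ρ) := by
    unfold hyp2F1
    apply continuousOn_tsum (u := fun n : ℕ => (1 + 1/c) * ((n:ℝ) + 1) * (1/2) ^ n)
      (fun n => (Continuous.continuousOn (by fun_prop))) hsum
    intro n x hx
    rw [Real.norm_eq_abs]
    apply hyp_coef_bound a b c hc n x
    rw [Metric.mem_closedBall, Real.dist_eq, sub_zero] at hx
    rw [← hρ]
    exact hx
  have hmem : Metric.closedBall (0:ℝ) ρ ∈ nhds (0:ℝ) := Metric.closedBall_mem_nhds 0 hρ0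
  have := hcont.continuousAt hmem
  simpa [ContinuousAt, hyp2F1_zero] using this

/-- as `(x₁,x₂) → (ξ,ξ)` with `x₁ < x₂ < x₃`, the ratio
`Z_b^(κ)(x₁,x₂,x₃,x₄)/(x₂−x₁)^{2/κ}` converges to `Z₃^(κ)(ξ,x₃,x₄)`. -/
theorem statement3 (κ : ℝ) (hκ : κ ∈ Set.Ioo (0:ℝ) 8)
    (ξ x₃ x₄ : ℝ) (hξ : ξ < x₃) (h34 : x₃ < x₄) :
    Filter.Tendsto
      (fun p : ℝ × ℝ => Zb κ p.1 p.2 x₃ x₄ / (p.2 - p.1) ^ (2/κ))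
      ((nhds ξ ×ˢ nhds ξ) ⊓ Filter.principal {p : ℝ × ℝ | p.1 < p.2 ∧ p.2 < x₃})
      (nhds (Z3 κ ξ x₃ x₄)) := by
  obtain ⟨hκ0, hκ8⟩ := hκ
  have hu : (0:ℝ) < x₃ - ξ := by linarith
  have hv : (0:ℝ) < x₄ - ξ := by linarith
  have hw : (0:ℝ) < x₄ - x₃ := by linarith
  set F := hyp2F1 (4/κ) (1 - 4/κ) (8/κ) with hFdef
  set g := fun p : ℝ × ℝ =>
    (x₄ - p.1) ^ (-(2 * hParam κ)) * (x₃ - p.2) ^ (-(2 * hParam κ)) *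
      ((x₄ - x₃) / ((x₃ - p.1) * (x₄ - p.2))) ^ (2/κ) *
      (F (crossRatio p.1 p.2 x₃ x₄) / F 1) with hg
  set L := ((nhds ξ ×ˢ nhds ξ) ⊓ Filter.principal {p : ℝ × ℝ | p.1 < p.2 ∧ p.2 < x₃}) with hL
  have hLle : L ≤ nhds (ξ, ξ) := by
    rw [nhds_prod_eq]; exact inf_le_left
  -- limit of g
  have hχ : Filter.Tendsto (fun p : ℝ × ℝ => crossRatio p.1 p.2 x₃ x₄) (nhds (ξ, ξ)) (nhds 0) := by
    have hc : ContinuousAt (fun p : ℝ × ℝ => crossRatio p.1 p.2 x₃ x₄) (ξ, ξ) := by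
      unfold crossRatio
      apply ContinuousAt.div
      · fun_prop
      · fun_prop
      · simp only
        positivity
    have h0 : crossRatio ξ ξ x₃ x₄ = 0 := by unfold crossRatio; simp
    simpa [ContinuousAt, h0] using hc
  have hF1 : Filter.Tendsto (fun p : ℝ × ℝ => F (crossRatio p.1 p.2 x₃ x₄) / F 1)
      (nhds (ξ, ξ)) (nhds (1 / F 1)) := by
    apply Filter.Tendsto.div_const
    exact (hyp2F1_tendsto_zero (4/κ) (1 - 4/κ) (8/κ) (by positivity)).comp hχ
  have t1 : Filter.Tendsto (fun p : ℝ × ℝ => (x₄ - p.1) ^ (-(2 * hParam κ)))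
      (nhds (ξ, ξ)) (nhds ((x₄ - ξ) ^ (-(2 * hParam κ)))) := by
    apply ContinuousAt.tendsto
    exact ((continuous_const.sub continuous_fst).continuousAt).rpow_const (Or.inl hv.ne')
  have t2 : Filter.Tendsto (fun p : ℝ × ℝ => (x₃ - p.2) ^ (-(2 * hParam κ)))
      (nhds (ξ, ξ)) (nhds ((x₃ - ξ) ^ (-(2 * hParam κ)))) := by
    apply ContinuousAt.tendsto
    exact ((continuous_const.sub continuous_snd).continuousAt).rpow_const (Or.inl hu.ne')
  have t3 : Filter.Tendsto (fun p : ℝ × ℝ => ((x₄ - x₃) / ((x₃ - p.1) * (x₄ - p.2))) ^ (2/κ))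
      (nhds (ξ, ξ)) (nhds (((x₄ - x₃) / ((x₃ - ξ) * (x₄ - ξ))) ^ (2/κ))) := by
    apply ContinuousAt.tendsto
    apply ContinuousAt.rpow_const
    · apply ContinuousAt.div continuousAt_const
      · fun_prop
      · simp only; positivity
    · left
      simp only
      positivity
  have hgT : Filter.Tendsto g L
      (nhds ((x₄ - ξ) ^ (-(2 * hParam κ)) * (x₃ - ξ) ^ (-(2 * hParam κ)) *
        ((x₄ - x₃) / ((x₃ - ξ) * (x₄ - ξ))) ^ (2/κ) * (1 / F 1))) :=
    (((t1.mul t2).mul t3).mul hF1).mono_left hLle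
  -- value equality
  have hval : (x₄ - ξ) ^ (-(2 * hParam κ)) * (x₃ - ξ) ^ (-(2 * hParam κ)) *
      ((x₄ - x₃) / ((x₃ - ξ) * (x₄ - ξ))) ^ (2/κ) * (1 / F 1) = Z3 κ ξ x₃ x₄ := by
    unfold Z3
    rw [← hFdef]
    rw [Real.div_rpow hw.le (by positivity), Real.mul_rpow hu.le hv.le]
    rw [show (1 - 8/κ) = (-(2 * hParam κ) - 2/κ) by unfold hParam; field_simp; ring]
    rw [Real.rpow_sub hu, Real.rpow_sub hv]
    have hup : (0:ℝ) < (x₃ - ξ) ^ (2/κ) := Real.rpow_pos_of_pos hu _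
    have hvp : (0:ℝ) < (x₄ - ξ) ^ (2/κ) := Real.rpow_pos_of_pos hv _
    have hnum : (x₄ - ξ) ^ (-(2 * hParam κ)) * (x₃ - ξ) ^ (-(2 * hParam κ)) *
        ((x₄ - x₃) ^ (2/κ) / ((x₃ - ξ) ^ (2/κ) * (x₄ - ξ) ^ (2/κ)))
        = (x₄ - x₃) ^ (2/κ) * ((x₃ - ξ) ^ (-(2 * hParam κ)) / (x₃ - ξ) ^ (2/κ)) *
          ((x₄ - ξ) ^ (-(2 * hParam κ)) / (x₄ - ξ) ^ (2/κ)) := by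
      field_simp
    rw [mul_one_div, hnum]
  rw [← hval]
  -- eventual equality
  apply Filter.Tendsto.congr' _ hgT
  have hmem : {p : ℝ × ℝ | p.1 < p.2 ∧ p.2 < x₃} ∈ L :=
    Filter.le_principal_iff.mp inf_le_right
  filter_upwards [hmem] with p hp
  obtain ⟨h12, h23⟩ := hp
  have hd : (0:ℝ) < p.2 - p.1 := by linarith
  have h31 : (0:ℝ) < x₃ - p.1 := by linarith
  have h42 : (0:ℝ) < x₄ - p.2 := by linarith
  have h32 : (0:ℝ) < x₃ - p.2 := by linarith
  have h41 : (0:ℝ) < x₄ - p.1 := by linarith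
  have hcr : crossRatio p.1 p.2 x₃ x₄ = (p.2 - p.1) * ((x₄ - x₃) / ((x₃ - p.1) * (x₄ - p.2))) := by
    unfold crossRatio; ring
  have hde : (p.2 - p.1) ^ (2/κ) ≠ 0 := (Real.rpow_pos_of_pos hd _).ne'
  rw [hg]
  simp only
  rw [Zb, ← hFdef, hcr, Real.mul_rpow hd.le (by positivity), eq_div_iff hde]
  ring
end
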